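/- Let p be prime and let a₁,...,a_n be distinct nonzero elements of Z/pZ written as pairs {bᵢ, cᵢ} with bᵢ ≠ cᵢ and bᵢ + cᵢ ≠ 0, for i = 1,...,m, together with further elements d₁,...,d_{n-2m}. Then the set of subset sums Σ of the whole collection satisfies |Σ| ≥ min(p, 3m + (n - 2m) + 1) = min(p, n + m + 1). -/

import Mathlib

/-- The set of all (possibly empty) subset sums of `A`. -/
def sigma0 {p : ℕ} (A : Finset (ZMod p)) : Finset (ZMod p) :=
  A.powerset.image (fun S => S.sum id)

open Pointwise

lemma sigma0_union {p : ℕ} {A B : Finset (ZMod p)} (hd : Disjoint A B) :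
    sigma0 (A ∪ B) = sigma0 A + sigma0 B := by
  ext x
  simp only [sigma0, Finset.mem_image, Finset.mem_powerset, Finset.mem_add]
  constructor
  · rintro ⟨S, hS, rfl⟩
    refine ⟨(S ∩ A).sum id, ⟨S ∩ A, Finset.inter_subset_right, rfl⟩,
      (S ∩ B).sum id, ⟨S ∩ B, Finset.inter_subset_right, rfl⟩, ?_⟩
    rw [← Finset.sum_union (hd.mono Finset.inter_subset_right Finset.inter_subset_right)]
    congr 1
    rw [← Finset.inter_union_distrib_left, Finset.inter_eq_left.2 hS]
  · rintro ⟨_, ⟨S, hS, rfl⟩, _, ⟨T, hT, rfl⟩, rfl⟩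
    refine ⟨S ∪ T, Finset.union_subset_union hS hT, ?_⟩
    rw [Finset.sum_union (hd.mono hS hT)]

lemma sigma0_nonempty {p : ℕ} (A : Finset (ZMod p)) : (sigma0 A).Nonempty :=
  ⟨0, Finset.mem_image.2 ⟨∅, by simp⟩⟩

lemma sigma0_singleton {p : ℕ} (a : ZMod p) : sigma0 {a} = {0, a} := by
  ext x
  simp only [sigma0, Finset.mem_image, Finset.mem_powerset, Finset.subset_singleton_iff,
    Finset.mem_insert, Finset.mem_singleton]
  constructor
  · rintro ⟨S, rfl | rfl, rfl⟩ <;> simp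
  · rintro (rfl | rfl)
    exacts [⟨∅, Or.inl rfl, by simp⟩, ⟨_, Or.inr rfl, by simp⟩]

lemma sigma0_pair {p : ℕ} {a b : ZMod p} (h : a ≠ b) :
    sigma0 {a, b} = {0, a, b, a + b} := by
  rw [show ({a, b} : Finset (ZMod p)) = {a} ∪ {b} by rfl,
    sigma0_union (by simpa using h), sigma0_singleton, sigma0_singleton]
  ext x
  simp [Finset.mem_add]
  aesop

lemma sigma0_base {p : ℕ} [Fact p.Prime] (A : Finset (ZMod p)) (h0 : (0 : ZMod p) ∉ A) :
    min p (A.card + 1) ≤ (sigma0 A).card := by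
  induction A using Finset.induction_on with
  | empty =>
    have : (1 : ℕ) ≤ (sigma0 (∅ : Finset (ZMod p))).card :=
      Finset.card_pos.2 (sigma0_nonempty _)
    have hp := (Fact.out : p.Prime).pos
    simp only [Finset.card_empty]
    omega
  | @insert a s ha ih =>
    have ha0 : a ≠ 0 := fun h => h0 (by simp [h])
    have hs0 : (0 : ZMod p) ∉ s := fun h => h0 (Finset.mem_insert_of_mem h)
    have hins : insert a s = {a} ∪ s := by
      rw [Finset.insert_eq]
    rw [hins, sigma0_union (by simpa using ha), sigma0_singleton]
    have hcd := ZMod.cauchy_davenport (Fact.out : p.Prime)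
      (s := ({0, a} : Finset (ZMod p))) (t := sigma0 s) ⟨0, by simp⟩ (sigma0_nonempty s)
    have hcard : ({0, a} : Finset (ZMod p)).card = 2 := by
      rw [Finset.card_insert_of_notMem (by simpa using ha0.symm), Finset.card_singleton]
    rw [hcard] at hcd
    have := ih hs0
    have hcardins : ({a} ∪ s).card = s.card + 1 := by
      rw [← hins, Finset.card_insert_of_notMem ha]
    omega

theorem subset_sums_with_pairs (p : ℕ) [Fact p.Prime]
    (A : Finset (ZMod p)) (h0 : (0 : ZMod p) ∉ A)
    (m : ℕ) (b c : Fin m → ZMod p)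
    (hb : ∀ i, b i ∈ A) (hc : ∀ i, c i ∈ A)
    (hdist : Function.Injective (fun x : Fin m ⊕ Fin m => Sum.elim b c x))
    (hpair : ∀ i, b i ≠ c i ∧ b i + c i ≠ 0) :
    min p (A.card + m + 1) ≤ (sigma0 A).card := by
  induction m generalizing A with
  | zero => simpa using sigma0_base A h0
  | succ m ih =>
    set b0 := b 0 with hb0def
    set c0 := c 0 with hc0def
    have hbc : b0 ≠ c0 := (hpair 0).1
    have hsum : b0 + c0 ≠ 0 := (hpair 0).2
    have hb0ne : b0 ≠ 0 := fun h => h0 (h ▸ hb 0)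
    have hc0ne : c0 ≠ 0 := fun h => h0 (h ▸ hc 0)
    set A' := A \ {b0, c0} with hA'
    have hsub : ({b0, c0} : Finset (ZMod p)) ⊆ A := by
      intro x hx
      rcases Finset.mem_insert.1 hx with rfl | hx
      · exact hb 0
      · rw [Finset.mem_singleton.1 hx]; exact hc 0
    have hAeq : A = A' ∪ {b0, c0} := by
      rw [hA', Finset.sdiff_union_of_subset hsub]
    have hdisj : Disjoint A' ({b0, c0} : Finset (ZMod p)) := Finset.sdiff_disjoint
    have hcardpair : ({b0, c0} : Finset (ZMod p)).card = 2 := by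
      rw [Finset.card_insert_of_notMem (by simpa using hbc), Finset.card_singleton]
    have hcardA' : A'.card = A.card - 2 := by
      rw [hA', Finset.card_sdiff_of_subset hsub, hcardpair]
    have hA2 : 2 ≤ A.card := hcardpair ▸ Finset.card_le_card hsub
    -- new pair functions
    have hbmem : ∀ i : Fin m, b i.succ ∈ A' := by
      intro i
      rw [hA', Finset.mem_sdiff]
      refine ⟨hb _, ?_⟩
      simp only [Finset.mem_insert, Finset.mem_singleton]
      rintro (h | h)
      · exact Fin.succ_ne_zero i (by simpa using hdist (a₁ := .inl i.succ) (a₂ := .inl 0) h)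
      · exact absurd (hdist (a₁ := .inl i.succ) (a₂ := .inr 0) h) (by simp)
    have hcmem : ∀ i : Fin m, c i.succ ∈ A' := by
      intro i
      rw [hA', Finset.mem_sdiff]
      refine ⟨hc _, ?_⟩
      simp only [Finset.mem_insert, Finset.mem_singleton]
      rintro (h | h)
      · exact absurd (hdist (a₁ := .inr i.succ) (a₂ := .inl 0) h) (by simp)
      · exact Fin.succ_ne_zero i (by simpa using hdist (a₁ := .inr i.succ) (a₂ := .inr 0) h)
    have h0' : (0 : ZMod p) ∉ A' := fun h => h0 (Finset.mem_sdiff.1 h).1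
    have hdist' : Function.Injective
        (fun x : Fin m ⊕ Fin m => Sum.elim (fun i => b i.succ) (fun i => c i.succ) x) := by
      intro x y hxy
      have h2 : Sum.map Fin.succ Fin.succ x = Sum.map Fin.succ Fin.succ y := by
        apply hdist
        cases x <;> cases y <;> simpa using hxy
      rcases x with i | i <;> rcases y with j | j
      · exact congrArg Sum.inl (Fin.succ_injective m (by simpa using h2))
      · simpa using h2
      · simpa using h2
      · exact congrArg Sum.inr (Fin.succ_injective m (by simpa using h2))
    have hIH := ih A' h0' (fun i => b i.succ) (fun i => c i.succ) hbmem hcmem hdist'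
      (fun i => hpair i.succ)
    -- combine
    have hset : sigma0 A = sigma0 A' + sigma0 {b0, c0} := by
      rw [hAeq, sigma0_union hdisj]
    have hpair4 : (sigma0 ({b0, c0} : Finset (ZMod p))).card = 4 := by
      rw [sigma0_pair hbc]
      rw [Finset.card_insert_of_notMem, Finset.card_insert_of_notMem,
        Finset.card_insert_of_notMem, Finset.card_singleton]
      · simp only [Finset.mem_singleton]
        intro h; exact hb0ne (by linear_combination h.symm)
      · simp only [Finset.mem_insert, Finset.mem_singleton]
        push_neg
        exact ⟨hbc, fun h => hc0ne (by linear_combination h.symm)⟩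
      · simp only [Finset.mem_insert, Finset.mem_singleton]
        push_neg
        exact ⟨hb0ne.symm, hc0ne.symm, fun h => hsum h.symm⟩
    have hcd := ZMod.cauchy_davenport (Fact.out : p.Prime)
      (sigma0_nonempty A') (sigma0_nonempty ({b0, c0} : Finset (ZMod p)))
    rw [hpair4, ← hset] at hcd
    omega
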